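/- Let μ and ν be probability measures on finite sets X and Y, and c: X × Y → ℝ≥0 a cost function. Let κ > max_{x,y} c(x,y), and define c_b on 2^X × 2^Y by c_b({x},{y}) = c(x,y) for singletons and c_b(A,B) = κ for all other pairs. Then the minimum over nonnegative assignments assg: 2^X × 2^Y → [0,1] with marginals equal to the Möbius transforms τ_μ and τ_ν of the cost ∑_{A,B} c_b(A,B)·assg(A,B) equals the minimum cost of the classical optimal transport problem between the probability distributions p(x) = μ({x}) and q(y) = ν({y}) for cost c. Moreover, any optimal assg restricted to pairs of singletons is an optimal classical transport plan. -/

import Mathlib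

open Finset

/-- The Möbius transform of a set function `μ` on a finite set:
`τ_μ(A) = ∑_{B ⊆ A} (−1)^{|A|−|B|} μ(B)`. -/
noncomputable def mobius {X : Type*} [DecidableEq X] (μ : Finset X → ℝ) (A : Finset X) : ℝ :=
  ∑ B ∈ A.powerset, (-1 : ℝ) ^ (A.card - B.card) * μ B

lemma neg_one_pow_sub' (m k : ℕ) (h : k ≤ m) : ((-1:ℝ))^(m-k) = (-1)^m * (-1)^k := by
  have hm : m + k = (m - k) + 2*k := by omega
  have : ((-1:ℝ))^(m+k) = (-1)^(m-k) := by
    rw [hm, pow_add, pow_mul]; norm_num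
  rw [← this, pow_add]

lemma measure_eq_sum {X : Type*} [DecidableEq X] (μ : Finset X → ℝ) (h0 : μ ∅ = 0)
    (hadd : ∀ A B : Finset X, Disjoint A B → μ (A ∪ B) = μ A + μ B) (A : Finset X) :
    μ A = ∑ x ∈ A, μ {x} := by
  induction A using Finset.cons_induction with
  | empty => simpa
  | cons a s ha ih =>
    rw [Finset.cons_eq_insert, Finset.insert_eq, hadd {a} s (by simpa),
      Finset.sum_union (by simpa), Finset.sum_singleton, ih]

lemma mobius_singleton {X : Type*} [DecidableEq X] (μ : Finset X → ℝ) (h0 : μ ∅ = 0) (x : X) :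
    mobius μ {x} = μ {x} := by
  have hp : ({x} : Finset X).powerset = {∅, {x}} := by
    ext B; simp [Finset.subset_singleton_iff]
  rw [mobius, hp, Finset.sum_pair (fun h => by simpa using congrArg Finset.card h)]
  simp [h0]

lemma mobius_card_ne_one {X : Type*} [DecidableEq X] (μ : Finset X → ℝ) (h0 : μ ∅ = 0)
    (hadd : ∀ A B : Finset X, Disjoint A B → μ (A ∪ B) = μ A + μ B)
    (A : Finset X) (hA : A.card ≠ 1) : mobius μ A = 0 := by
  rcases Finset.eq_empty_or_nonempty A with rfl | hne
  · simp [mobius, h0]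
  have hcard : 2 ≤ A.card := by
    have h0' : A.card ≠ 0 := fun h =>
      (Finset.nonempty_iff_ne_empty.mp hne) (Finset.card_eq_zero.mp h)
    omega
  rw [mobius]
  calc ∑ B ∈ A.powerset, (-1:ℝ)^(A.card - B.card) * μ B
      = ∑ B ∈ A.powerset, ∑ x ∈ A, (if x ∈ B then (-1:ℝ)^(A.card - B.card) * μ {x} else 0) := by
        refine Finset.sum_congr rfl fun B hB => ?_
        rw [measure_eq_sum μ h0 hadd B, Finset.mul_sum]
        rw [Finset.sum_ite_mem, Finset.inter_eq_right.mpr (Finset.mem_powerset.mp hB)]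
    _ = ∑ x ∈ A, ∑ B ∈ A.powerset, (if x ∈ B then (-1:ℝ)^(A.card - B.card) * μ {x} else 0) :=
        Finset.sum_comm
    _ = ∑ x ∈ A, (0:ℝ) := by
        refine Finset.sum_congr rfl fun x hx => ?_
        rw [Finset.sum_ite, Finset.sum_const_zero, add_zero]
        have hbij : ∑ B ∈ A.powerset.filter (fun B => x ∈ B), (-1:ℝ)^(A.card - B.card) * μ {x}
            = ∑ C ∈ (A.erase x).powerset, (-1:ℝ)^(A.card - (C.card + 1)) * μ {x} := by
          refine Finset.sum_nbij' (fun B => B.erase x) (fun C => insert x C) ?_ ?_ ?_ ?_ ?_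
          · intro B hB
            simp only [Finset.mem_filter, Finset.mem_powerset] at hB
            exact Finset.mem_powerset.mpr (Finset.erase_subset_erase x hB.1)
          · intro C hC
            simp only [Finset.mem_powerset] at hC
            refine Finset.mem_filter.mpr ⟨Finset.mem_powerset.mpr ?_, Finset.mem_insert_self x C⟩
            exact Finset.insert_subset hx (hC.trans (Finset.erase_subset x A))
          · intro B hB
            simp only [Finset.mem_filter] at hB
            exact Finset.insert_erase hB.2
          · intro C hC
            simp only [Finset.mem_powerset] at hC
            exact Finset.erase_insert (fun hxC => (Finset.mem_erase.mp (hC hxC)).1 rfl)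
          · intro B hB
            simp only [Finset.mem_filter] at hB
            congr 2
            rw [Finset.card_erase_of_mem hB.2]
            have : 1 ≤ B.card := Finset.card_pos.mpr ⟨x, hB.2⟩
            omega
        rw [hbij]
        have hsum : ∀ C ∈ (A.erase x).powerset,
            (-1:ℝ)^(A.card - (C.card + 1)) * μ {x} = ((-1:ℝ)^(A.card - 1) * (-1)^C.card) * μ {x} := by
          intro C hC
          have hle : C.card ≤ A.card - 1 := by
            have := Finset.card_le_card (Finset.mem_powerset.mp hC)
            rw [Finset.card_erase_of_mem hx] at this
            exact this
          congr 1
          have : A.card - (C.card + 1) = (A.card - 1) - C.card := by omega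
          rw [this, neg_one_pow_sub' _ _ hle]
        rw [Finset.sum_congr rfl hsum]
        have : ∑ C ∈ (A.erase x).powerset, ((-1:ℝ)^(A.card - 1) * (-1)^C.card) * μ {x}
            = ((-1:ℝ)^(A.card - 1) * μ {x}) * ∑ C ∈ (A.erase x).powerset, (-1:ℝ)^C.card := by
          rw [Finset.mul_sum]; refine Finset.sum_congr rfl fun C _ => by ring
        rw [this]
        have hne' : (A.erase x).Nonempty := by
          rw [← Finset.card_pos, Finset.card_erase_of_mem hx]; omega
        have hz : ∑ C ∈ (A.erase x).powerset, (-1:ℝ)^C.card = 0 := by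
          have := Finset.sum_powerset_neg_one_pow_card_of_nonempty hne'
          have h2 : ((∑ m ∈ (A.erase x).powerset, (-1:ℤ)^m.card : ℤ) : ℝ)
              = ∑ C ∈ (A.erase x).powerset, (-1:ℝ)^C.card := by push_cast; ring_nf
          rw [← h2, this]; simp
        rw [hz, mul_zero]
    _ = 0 := Finset.sum_const_zero

lemma sum_singletons {Y : Type*} [Fintype Y] [DecidableEq Y] (f : Finset Y → ℝ)
    (hf : ∀ B : Finset Y, B.card ≠ 1 → f B = 0) :
    ∑ B : Finset Y, f B = ∑ y : Y, f {y} := by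
  rw [show (∑ y : Y, f {y}) = ∑ B ∈ Finset.univ.image (fun y : Y => ({y} : Finset Y)), f B from
    (Finset.sum_image (fun a _ b _ h => Finset.singleton_injective h)).symm]
  refine (Finset.sum_subset (Finset.subset_univ _) ?_).symm
  intro B _ hB
  refine hf B fun h1 => ?_
  obtain ⟨y, hy⟩ := Finset.card_eq_one.mp h1
  exact hB (Finset.mem_image.mpr ⟨y, Finset.mem_univ y, hy.symm⟩)

/-- Feasibility for the classical optimal transport problem between the
distributions `x ↦ μ {x}` and `y ↦ ν {y}`. -/
def ClassFeas {X Y : Type*} [Fintype X] [Fintype Y] [DecidableEq X] [DecidableEq Y]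
    (μ : Finset X → ℝ) (ν : Finset Y → ℝ) (γ : X → Y → ℝ) : Prop :=
  (∀ x y, 0 ≤ γ x y) ∧ (∀ x, ∑ y, γ x y = μ {x}) ∧ (∀ y, ∑ x, γ x y = ν {y})

/-- Feasibility for the bpa-based transport problem: nonnegative assignment with
marginals equal to the Möbius transforms. -/
noncomputable def BpaFeas {X Y : Type*} [Fintype X] [Fintype Y] [DecidableEq X] [DecidableEq Y]
    (μ : Finset X → ℝ) (ν : Finset Y → ℝ) (assg : Finset X → Finset Y → ℝ) : Prop :=
  (∀ A B, 0 ≤ assg A B ∧ assg A B ≤ 1) ∧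
  (∀ A : Finset X, ∑ B : Finset Y, assg A B = mobius μ A) ∧
  (∀ B : Finset Y, ∑ A : Finset X, assg A B = mobius ν B)

theorem stmt10 {X Y : Type*} [Fintype X] [Fintype Y] [DecidableEq X] [DecidableEq Y]
    (μ : Finset X → ℝ) (ν : Finset Y → ℝ)
    (hμrange : ∀ A : Finset X, 0 ≤ μ A ∧ μ A ≤ 1)
    (hμ0 : μ (∅ : Finset X) = 0) (hμ1 : μ (Finset.univ : Finset X) = 1)
    (hμadd : ∀ A B : Finset X, Disjoint A B → μ (A ∪ B) = μ A + μ B)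
    (hνrange : ∀ B : Finset Y, 0 ≤ ν B ∧ ν B ≤ 1)
    (hν0 : ν (∅ : Finset Y) = 0) (hν1 : ν (Finset.univ : Finset Y) = 1)
    (hνadd : ∀ A B : Finset Y, Disjoint A B → ν (A ∪ B) = ν A + ν B)
    (c : X → Y → ℝ) (hc : ∀ x y, 0 ≤ c x y)
    (κ : ℝ) (hκ : ∀ x y, c x y < κ)
    (cb : Finset X → Finset Y → ℝ)
    (hcb1 : ∀ (x : X) (y : Y), cb {x} {y} = c x y)
    (hcb2 : ∀ (A : Finset X) (B : Finset Y), ¬ (A.card = 1 ∧ B.card = 1) → cb A B = κ) :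
    sInf {t : ℝ | ∃ γ : X → Y → ℝ, ClassFeas μ ν γ ∧ t = ∑ x, ∑ y, c x y * γ x y} =
      sInf {t : ℝ | ∃ assg : Finset X → Finset Y → ℝ, BpaFeas μ ν assg ∧
        t = ∑ A : Finset X, ∑ B : Finset Y, cb A B * assg A B} ∧
    ∀ assg : Finset X → Finset Y → ℝ, BpaFeas μ ν assg →
      (∑ A : Finset X, ∑ B : Finset Y, cb A B * assg A B) =
        sInf {t : ℝ | ∃ assg' : Finset X → Finset Y → ℝ, BpaFeas μ ν assg' ∧
          t = ∑ A : Finset X, ∑ B : Finset Y, cb A B * assg' A B} →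
      ClassFeas μ ν (fun x y => assg {x} {y}) ∧
      (∑ x, ∑ y, c x y * assg {x} {y}) =
        sInf {t : ℝ | ∃ γ : X → Y → ℝ, ClassFeas μ ν γ ∧ t = ∑ x, ∑ y, c x y * γ x y} := by
  classical
  -- support lemma
  have hsupp : ∀ assg : Finset X → Finset Y → ℝ, BpaFeas μ ν assg →
      ∀ A B, ¬ (A.card = 1 ∧ B.card = 1) → assg A B = 0 := by
    intro assg ⟨h1, h2, h3⟩ A B hAB
    by_cases hA : A.card = 1
    · have hB : B.card ≠ 1 := fun h => hAB ⟨hA, h⟩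
      have hz : ∑ A' : Finset X, assg A' B = 0 := by
        rw [h3 B, mobius_card_ne_one ν hν0 hνadd B hB]
      exact (Finset.sum_eq_zero_iff_of_nonneg (fun A' _ => (h1 A' B).1)).mp hz A
        (Finset.mem_univ A)
    · have hz : ∑ B' : Finset Y, assg A B' = 0 := by
        rw [h2 A, mobius_card_ne_one μ hμ0 hμadd A hA]
      exact (Finset.sum_eq_zero_iff_of_nonneg (fun B' _ => (h1 A B').1)).mp hz B
        (Finset.mem_univ B)
  -- cost lemma
  have hcost : ∀ assg : Finset X → Finset Y → ℝ,
      (∀ A B, ¬ (A.card = 1 ∧ B.card = 1) → assg A B = 0) →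
      (∑ A : Finset X, ∑ B : Finset Y, cb A B * assg A B)
        = ∑ x, ∑ y, c x y * assg {x} {y} := by
    intro assg hs
    rw [sum_singletons (fun A => ∑ B : Finset Y, cb A B * assg A B)
      (fun A hA => Finset.sum_eq_zero fun B _ => by
        rw [hs A B (fun h => hA h.1), mul_zero])]
    refine Finset.sum_congr rfl fun x _ => ?_
    rw [sum_singletons (fun B => cb {x} B * assg {x} B)
      (fun B hB => by
        show cb {x} B * assg {x} B = 0
        rw [hs {x} B (fun h => hB h.2), mul_zero])]
    exact Finset.sum_congr rfl fun y _ => by rw [hcb1]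
  -- bpa feasible → restriction classically feasible
  have hBtoC : ∀ assg : Finset X → Finset Y → ℝ, BpaFeas μ ν assg →
      ClassFeas μ ν (fun x y => assg {x} {y}) := by
    intro assg hfeas
    obtain ⟨h1, h2, h3⟩ := hfeas
    refine ⟨fun x y => (h1 {x} {y}).1, fun x => ?_, fun y => ?_⟩
    · rw [← sum_singletons (fun B => assg {x} B)
        (fun B hB => hsupp assg ⟨h1, h2, h3⟩ {x} B (fun h => hB h.2)),
        h2, mobius_singleton μ hμ0]
    · rw [← sum_singletons (fun A => assg A {y})
        (fun A hA => hsupp assg ⟨h1, h2, h3⟩ A {y} (fun h => hA h.1)),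
        h3, mobius_singleton ν hν0]
  -- classically feasible → bpa extend
  have hCtoB : ∀ γ : X → Y → ℝ, ClassFeas μ ν γ →
      ∃ assg : Finset X → Finset Y → ℝ, BpaFeas μ ν assg ∧
        (∀ x y, assg {x} {y} = γ x y) ∧
        (∀ A B, ¬ (A.card = 1 ∧ B.card = 1) → assg A B = 0) := by
    intro γ ⟨hg1, hg2, hg3⟩
    set assg : Finset X → Finset Y → ℝ :=
      fun A B => ∑ x : X, ∑ y : Y, if A = {x} ∧ B = {y} then γ x y else 0 with hassg
    have hres : ∀ x y, assg {x} {y} = γ x y := by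
      intro x y
      simp [hassg, Finset.singleton_inj, ite_and]
    have hz : ∀ A B, ¬ (A.card = 1 ∧ B.card = 1) → assg A B = 0 := by
      intro A B hAB
      refine Finset.sum_eq_zero fun x _ => Finset.sum_eq_zero fun y _ => ?_
      refine if_neg fun ⟨hA, hB⟩ => hAB ⟨?_, ?_⟩ <;> simp [hA, hB]
    have hnn : ∀ A B, 0 ≤ assg A B := fun A B =>
      Finset.sum_nonneg fun x _ => Finset.sum_nonneg fun y _ => by
        by_cases h : A = {x} ∧ B = {y}
        · rw [if_pos h]; exact hg1 x y
        · rw [if_neg h]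
    refine ⟨assg, ⟨fun A B => ⟨hnn A B, ?_⟩, ?_, ?_⟩, hres, hz⟩
    · by_cases h : A.card = 1 ∧ B.card = 1
      · obtain ⟨x, rfl⟩ := Finset.card_eq_one.mp h.1
        obtain ⟨y, rfl⟩ := Finset.card_eq_one.mp h.2
        rw [hres]
        calc γ x y ≤ ∑ y', γ x y' :=
              Finset.single_le_sum (fun y' _ => hg1 x y') (Finset.mem_univ y)
          _ = μ {x} := hg2 x
          _ ≤ 1 := (hμrange {x}).2
      · rw [hz A B h]; norm_num
    · intro A
      by_cases h : A.card = 1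
      · obtain ⟨x, rfl⟩ := Finset.card_eq_one.mp h
        rw [sum_singletons (fun B => assg {x} B) (fun B hB => hz {x} B (fun h' => hB h'.2)),
          mobius_singleton μ hμ0]
        calc ∑ y, assg {x} {y} = ∑ y, γ x y := Finset.sum_congr rfl fun y _ => hres x y
          _ = μ {x} := hg2 x
      · rw [mobius_card_ne_one μ hμ0 hμadd A h]
        exact Finset.sum_eq_zero fun B _ => hz A B (fun h' => h h'.1)
    · intro B
      by_cases h : B.card = 1
      · obtain ⟨y, rfl⟩ := Finset.card_eq_one.mp h
        rw [sum_singletons (fun A => assg A {y}) (fun A hA => hz A {y} (fun h' => hA h'.1)),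
          mobius_singleton ν hν0]
        calc ∑ x, assg {x} {y} = ∑ x, γ x y := Finset.sum_congr rfl fun x _ => hres x y
          _ = ν {y} := hg3 y
      · rw [mobius_card_ne_one ν hν0 hνadd B h]
        exact Finset.sum_eq_zero fun A _ => hz A B (fun h' => h h'.2)
  have hset : {t : ℝ | ∃ γ : X → Y → ℝ, ClassFeas μ ν γ ∧ t = ∑ x, ∑ y, c x y * γ x y}
      = {t : ℝ | ∃ assg : Finset X → Finset Y → ℝ, BpaFeas μ ν assg ∧
        t = ∑ A : Finset X, ∑ B : Finset Y, cb A B * assg A B} := by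
    ext t
    simp only [Set.mem_setOf_eq]
    constructor
    · rintro ⟨γ, hγ, rfl⟩
      obtain ⟨assg, hfeas, hres, hz⟩ := hCtoB γ hγ
      refine ⟨assg, hfeas, ?_⟩
      rw [hcost assg hz]
      exact (Finset.sum_congr rfl fun x _ => Finset.sum_congr rfl fun y _ => by rw [hres]).symm
    · rintro ⟨assg, hfeas, rfl⟩
      refine ⟨fun x y => assg {x} {y}, hBtoC assg hfeas, ?_⟩
      simpa using hcost assg (hsupp assg hfeas)
  refine ⟨by rw [hset], ?_⟩
  intro assg hfeas hopt
  refine ⟨hBtoC assg hfeas, ?_⟩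
  rw [hset, ← hcost assg (hsupp assg hfeas)]
  exact hopt
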